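/- Let F be a finite forest whose vertex set is partitioned into two sides 𝒢 and 𝒱 (F is bipartite with parts 𝒢 and 𝒱), where |𝒢| = q and every leaf of F belongs to 𝒢. Then there exists a set E' ⊆ E(F) with |E'| ≤ q - 1 such that every vertex of 𝒱 is incident to at most one edge of E(F) \ E'. -/

import Mathlib

open SimpleGraph Finset

private lemma stmt13_len_zero {W : Type*} {G : SimpleGraph W} {u v : W}
    (w : G.Walk u v) (huv : u = v) (hw : w.IsPath) : w.length = 0 := by
  subst huv
  rw [(SimpleGraph.Walk.isPath_iff_eq_nil (p := w)).mp hw]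
  rfl

/-- In a finite forest `F` bipartite with parts `A` (of size `q`) and its
complement, in which every leaf belongs to `A`, there is a set `E'` of at most
`q - 1` edges such that every vertex outside `A` is incident to at most one edge
outside `E'`. -/
theorem stmt13 {W : Type*} [Fintype W] [DecidableEq W] (F : SimpleGraph W)
    [DecidableRel F.Adj] (hF : F.IsAcyclic)
    (A : Finset W) (q : ℕ) (hq : A.card = q) (hq1 : 1 ≤ q)
    (hbip : ∀ a b : W, F.Adj a b → (a ∈ A ↔ b ∉ A))
    (hleaf : ∀ v : W, F.degree v = 1 → v ∈ A) :
    ∃ E' ⊆ F.edgeFinset, E'.card ≤ q - 1 ∧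
      ∀ v ∉ A, (F.incidenceFinset v \ E').card ≤ 1 := by
  classical
  -- two vertices outside `A` incident to the same edge coincide
  have huniq : ∀ (e : Sym2 W) (u v : W), e ∈ F.incidenceSet u → e ∈ F.incidenceSet v →
      u ∉ A → v ∉ A → u = v := by
    intro e u v hu hv huA hvA
    by_contra hne
    have hadj : F.Adj u v := F.adj_of_mem_incidenceSet hne hu hv
    exact huA ((hbip u v hadj).mpr hvA)
  set B : Finset W := univ.filter (fun v => v ∉ A ∧ 0 < F.degree v) with hBdef
  -- a chosen incident edge for each vertex of `B`
  let keep : W → Sym2 W := fun v =>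
    if h : (F.incidenceFinset v).Nonempty then h.choose else s(v, v)
  have hkeepmem : ∀ v ∈ B, keep v ∈ F.incidenceFinset v := by
    intro v hv
    have hpos : 0 < F.degree v := (mem_filter.mp hv).2.2
    have hne : (F.incidenceFinset v).Nonempty := by
      rw [← F.card_incidenceFinset_eq_degree] at hpos
      exact card_pos.mp hpos
    simp only [keep, dif_pos hne]
    exact hne.choose_spec
  have himsub : B.image keep ⊆ F.edgeFinset := by
    intro e he
    obtain ⟨u, hu, rfl⟩ := mem_image.mp he
    have h := (mem_incidenceFinset (G := F) _ _).mp (hkeepmem u hu)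
    rw [mem_edgeFinset]
    exact F.incidenceSet_subset u h
  have hinj : Set.InjOn keep ↑B := by
    intro u hu u' hu' heq
    rw [mem_coe] at hu hu'
    have h1 := (mem_incidenceFinset (G := F) _ _).mp (hkeepmem u hu)
    have h2 := (mem_incidenceFinset (G := F) _ _).mp (hkeepmem u' hu')
    rw [heq] at h1
    exact huniq _ u u' h1 h2 ((mem_filter.mp hu).2.1) ((mem_filter.mp hu').2.1)
  -- main counting bound
  have hcard : F.edgeFinset.card ≤ q - 1 + B.card := by
    rcases Finset.eq_empty_or_nonempty F.edgeFinset with hE | hE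
    · simp [hE]
    · -- an edge exists
      obtain ⟨e0, he0⟩ := hE
      rw [mem_edgeFinset] at he0
      obtain ⟨a0, b0, h0⟩ : ∃ a b, F.Adj a b := by
        revert he0
        refine Sym2.ind (fun a b he => ?_) e0
        exact ⟨a, b, F.mem_edgeSet.mp he⟩
      -- roots of connected components
      let root : W → W := fun v => Quot.out (F.connectedComponentMk v)
      have hroot_reach : ∀ v, F.Reachable (root v) v := fun v =>
        ConnectedComponent.exact (Quot.out_eq _)
      have hrr : ∀ v, root (root v) = root v := fun v =>
        congrArg Quot.out (Quot.out_eq _)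
      have hrooteq : ∀ a b, F.Adj a b → root a = root b := fun a b h =>
        congrArg Quot.out (ConnectedComponent.connectedComponentMk_eq_of_adj h)
      -- chosen path from each vertex to its root
      let Q : ∀ v : W, F.Path v (root v) := fun v =>
        (Classical.choice (hroot_reach v).symm).toPath
      -- key step: each edge is the first edge of the path of one of its endpoints
      have hkey : ∀ a b, F.Adj a b →
          ((Q a).1.getVert 1 = b ∧ a ≠ root a) ∨ ((Q b).1.getVert 1 = a ∧ b ≠ root b) := by
        intro a b hab
        by_cases hmem : a ∈ (Q b).1.support
        · right
          have htp : ((Q b).1.takeUntil a hmem).IsPath := (Q b).2.takeUntil hmem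
          have hsingle : (⟨(Q b).1.takeUntil a hmem, htp⟩ : F.Path b a) =
              Path.singleton hab.symm := hF.path_unique _ _
          have hts : (Q b).1.takeUntil a hmem = Walk.cons hab.symm Walk.nil := by
            have := congrArg Subtype.val hsingle
            simpa [Path.singleton] using this
          have hspec := (Q b).1.take_spec hmem
          have hQb : (Q b).1 = Walk.cons hab.symm ((Q b).1.dropUntil a hmem) := by
            conv_lhs => rw [← hspec, hts]
            simp
          refine ⟨?_, ?_⟩
          · rw [hQb, Walk.getVert_cons_succ, Walk.getVert_zero]
          · intro hbr
            have hlen := stmt13_len_zero (Q b).1 hbr (Q b).2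
            rw [hQb] at hlen
            simp at hlen
        · left
          have hc : (Walk.cons hab (Q b).1).IsPath := (Q b).2.cons hmem
          have hre : root b = root a := (hrooteq a b hab).symm
          have hQa : Q a = ⟨(Walk.cons hab (Q b).1).copy rfl hre, by
              rwa [Walk.isPath_copy]⟩ := hF.path_unique _ _
          refine ⟨?_, ?_⟩
          · rw [hQa]
            simp [Walk.getVert_copy, Walk.getVert_cons_succ, Walk.getVert_zero]
          · intro har
            have hlen := stmt13_len_zero (Q a).1 har (Q a).2
            rw [hQa] at hlen
            simp [Walk.length_copy] at hlen
      -- the set of non-root support vertices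
      set S : Finset W := univ.filter (fun v => 0 < F.degree v ∧ v ≠ root v) with hSdef
      have hsurj : Set.SurjOn (fun v => s(v, (Q v).1.getVert 1)) ↑S ↑F.edgeFinset := by
        intro e he
        rw [mem_coe, mem_edgeFinset] at he
        revert he
        refine Sym2.ind (fun a b he => ?_) e
        rw [F.mem_edgeSet] at he
        rcases hkey a b he with ⟨h1, h2⟩ | ⟨h1, h2⟩
        · refine ⟨a, ?_, ?_⟩
          · simp only [hSdef, coe_filter, Set.mem_setOf_eq, mem_univ, true_and]
            exact ⟨(degree_pos_iff_exists_adj (G := F) _).mpr ⟨b, he⟩, h2⟩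
          · show s(a, (Q a).1.getVert 1) = s(a, b)
            rw [h1]
        · refine ⟨b, ?_, ?_⟩
          · simp only [hSdef, coe_filter, Set.mem_setOf_eq, mem_univ, true_and]
            exact ⟨(degree_pos_iff_exists_adj (G := F) _).mpr ⟨a, he.symm⟩, h2⟩
          · show s(b, (Q b).1.getVert 1) = s(a, b)
            rw [h1, Sym2.eq_swap]
      have hES : F.edgeFinset.card ≤ S.card := card_le_card_of_surjOn _ hsurj
      -- the root of the component of `a0` is a support vertex
      have hr0deg : 0 < F.degree (root a0) := by
        rcases eq_or_ne (root a0) a0 with h | h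
        · rw [h]
          exact (degree_pos_iff_exists_adj (G := F) _).mpr ⟨b0, h0⟩
        · have w : F.Walk (root a0) a0 := Classical.choice (hroot_reach a0)
          have hnn : ¬ w.Nil := Walk.not_nil_of_ne h
          exact (degree_pos_iff_exists_adj (G := F) _).mpr ⟨w.getVert 1, w.adj_snd hnn⟩
      have hr0mem : root a0 ∈ A ∪ B := by
        by_cases hA : root a0 ∈ A
        · exact mem_union_left _ hA
        · exact mem_union_right _ (by simp [hBdef, hA, hr0deg])
      have hSsub : S ⊆ (A ∪ B).erase (root a0) := by
        intro x hx
        rw [hSdef, mem_filter] at hx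
        obtain ⟨-, hdeg, hner⟩ := hx
        rw [mem_erase]
        refine ⟨?_, ?_⟩
        · intro hxr
          apply hner
          rw [hxr, hrr]
        · by_cases hA : x ∈ A
          · exact mem_union_left _ hA
          · exact mem_union_right _ (by simp [hBdef, hA, hdeg])
      have h1 : S.card ≤ (A ∪ B).card - 1 := by
        calc S.card ≤ ((A ∪ B).erase (root a0)).card := card_le_card hSsub
          _ = (A ∪ B).card - 1 := card_erase_of_mem hr0mem
      have h2 : (A ∪ B).card ≤ q + B.card := by
        calc (A ∪ B).card ≤ A.card + B.card := card_union_le _ _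
          _ = q + B.card := by rw [hq]
      have h3 : 1 ≤ (A ∪ B).card := card_pos.mpr ⟨root a0, hr0mem⟩
      omega
  refine ⟨F.edgeFinset \ B.image keep, sdiff_subset, ?_, ?_⟩
  · rw [card_sdiff_of_subset himsub, card_image_of_injOn hinj]
    omega
  · intro v hv
    have hsub : F.incidenceFinset v \ (F.edgeFinset \ B.image keep) ⊆ {keep v} := by
      intro e he
      rw [mem_sdiff] at he
      obtain ⟨hei, hnot⟩ := he
      have heiS := (mem_incidenceFinset (G := F) _ _).mp hei
      have heE : e ∈ F.edgeFinset := by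
        rw [mem_edgeFinset]
        exact F.incidenceSet_subset v heiS
      have heK : e ∈ B.image keep := by
        by_contra hk
        exact hnot (mem_sdiff.mpr ⟨heE, hk⟩)
      obtain ⟨u, hu, hue⟩ := mem_image.mp heK
      have huA : u ∉ A := (mem_filter.mp hu).2.1
      have huiS := (mem_incidenceFinset (G := F) _ _).mp (hkeepmem u hu)
      rw [hue] at huiS
      have : u = v := huniq e u v huiS heiS huA hv
      rw [mem_singleton, ← hue, this]
    calc (F.incidenceFinset v \ (F.edgeFinset \ B.image keep)).card
        ≤ ({keep v} : Finset (Sym2 W)).card := card_le_card hsub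
      _ = 1 := card_singleton _
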